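/- Let t ≥ 2 and let G_{A,B} be a K_{t,t}-free bipartite graph with |A| = m and |B| = n. Let ε, ε' ∈ (0,1). Suppose N is a family of s t-element subsets of A such that every b ∈ B with deg(b) ≥ εm has some T ∈ N with T ⊆ N(b), and N' is a family of s' t-element subsets of B such that every a ∈ A with deg(a) ≥ ε'n has some T' ∈ N' with T' ⊆ N(a). Then |E(G)| ≤ n·⌊εm⌋ + m·⌊ε'n⌋ + s·s'·(t−1)². -/

import Mathlib

open scoped Classical
open Finset

theorem stmt_2 {α β : Type*} [DecidableEq α] [DecidableEq β]
    (t m n s s' : ℕ) (ht : 2 ≤ t)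
    (A : Finset α) (B : Finset β) (E : Finset (α × β))
    (hE : E ⊆ A ×ˢ B) (hm : A.card = m) (hn : B.card = n)
    (hfree : ¬ ∃ (S : Finset α) (T : Finset β), S ⊆ A ∧ T ⊆ B ∧
      S.card = t ∧ T.card = t ∧ ∀ a ∈ S, ∀ b ∈ T, (a, b) ∈ E)
    (ε ε' : ℝ) (hε0 : 0 < ε) (hε1 : ε < 1) (hε'0 : 0 < ε') (hε'1 : ε' < 1)
    (N : Finset (Finset α)) (hs : N.card = s)
    (hNsub : ∀ T ∈ N, T ⊆ A ∧ T.card = t)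
    (hnet : ∀ b ∈ B, ε * m ≤ ((A.filter fun a => (a, b) ∈ E).card : ℝ) →
      ∃ T ∈ N, T ⊆ A.filter fun a => (a, b) ∈ E)
    (N' : Finset (Finset β)) (hs' : N'.card = s')
    (hN'sub : ∀ T' ∈ N', T' ⊆ B ∧ T'.card = t)
    (hnet' : ∀ a ∈ A, ε' * n ≤ ((B.filter fun b => (a, b) ∈ E).card : ℝ) →
      ∃ T' ∈ N', T' ⊆ B.filter fun b => (a, b) ∈ E) :
    E.card ≤ n * ⌊ε * (m : ℝ)⌋₊ + m * ⌊ε' * (n : ℝ)⌋₊ + s * s' * (t - 1) ^ 2 := by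
  classical
  set E1 := E.filter (fun p => (((A.filter fun a => (a, p.2) ∈ E).card : ℝ) < ε * m)) with hE1
  set E2 := E.filter (fun p => ε * m ≤ ((A.filter fun a => (a, p.2) ∈ E).card : ℝ) ∧
      (((B.filter fun b => (p.1, b) ∈ E).card : ℝ) < ε' * n)) with hE2
  set E3 := E.filter (fun p => ε * m ≤ ((A.filter fun a => (a, p.2) ∈ E).card : ℝ) ∧
      ε' * n ≤ ((B.filter fun b => (p.1, b) ∈ E).card : ℝ)) with hE3
  have hcover : E ⊆ E1 ∪ E2 ∪ E3 := by
    intro p hp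
    simp only [hE1, hE2, hE3, mem_union, mem_filter]
    rcases lt_or_ge (((A.filter fun a => (a, p.2) ∈ E).card : ℝ)) (ε * m) with h | h
    · exact Or.inl (Or.inl ⟨hp, h⟩)
    · rcases lt_or_ge (((B.filter fun b => (p.1, b) ∈ E).card : ℝ)) (ε' * n) with h' | h'
      · exact Or.inl (Or.inr ⟨hp, h, h'⟩)
      · exact Or.inr ⟨hp, h, h'⟩
  have hcard : E.card ≤ E1.card + E2.card + E3.card :=
    (card_le_card hcover).trans ((card_union_le _ _).trans
      (Nat.add_le_add_right (card_union_le _ _) _))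
  -- bound on E1
  have h1 : E1.card ≤ n * ⌊ε * (m : ℝ)⌋₊ := by
    have hmap : ∀ p ∈ E1, p.2 ∈ B := by
      intro p hp
      have : p ∈ E := mem_of_mem_filter p hp
      exact (mem_product.1 (hE this)).2
    rw [card_eq_sum_card_fiberwise hmap]
    calc ∑ b ∈ B, (E1.filter fun p => p.2 = b).card
        ≤ ∑ _b ∈ B, ⌊ε * (m : ℝ)⌋₊ := by
          apply sum_le_sum
          intro b hb
          by_cases hdb : (((A.filter fun a => (a, b) ∈ E).card : ℝ) < ε * m)
          · have hfib : (E1.filter fun p => p.2 = b).card ≤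
                (A.filter fun a => (a, b) ∈ E).card := by
              apply card_le_card_of_injOn Prod.fst
              · intro p hp
                simp only [hE1, mem_coe, mem_filter] at hp
                obtain ⟨⟨hpE, _⟩, hpb⟩ := hp
                simp only [mem_coe, mem_filter]
                refine ⟨(mem_product.1 (hE hpE)).1, ?_⟩
                rw [← hpb] at *
                exact hpE
              · intro p hp q hq hpq
                simp only [hE1, mem_coe, mem_filter] at hp hq
                exact Prod.ext hpq (hp.2.trans hq.2.symm)
            refine hfib.trans (Nat.le_floor ?_)
            exact hdb.le
          · have : (E1.filter fun p => p.2 = b) = ∅ := by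
              rw [filter_eq_empty_iff]
              intro p hp
              simp only [hE1, mem_filter] at hp
              intro hpb
              rw [hpb] at hp
              exact hdb hp.2
            simp [this]
      _ = n * ⌊ε * (m : ℝ)⌋₊ := by rw [sum_const, smul_eq_mul, hn]
  -- bound on E2
  have h2 : E2.card ≤ m * ⌊ε' * (n : ℝ)⌋₊ := by
    have hmap : ∀ p ∈ E2, p.1 ∈ A := by
      intro p hp
      have : p ∈ E := mem_of_mem_filter p hp
      exact (mem_product.1 (hE this)).1
    rw [card_eq_sum_card_fiberwise hmap]
    calc ∑ a ∈ A, (E2.filter fun p => p.1 = a).card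
        ≤ ∑ _a ∈ A, ⌊ε' * (n : ℝ)⌋₊ := by
          apply sum_le_sum
          intro a ha
          by_cases hda : (((B.filter fun b => (a, b) ∈ E).card : ℝ) < ε' * n)
          · have hfib : (E2.filter fun p => p.1 = a).card ≤
                (B.filter fun b => (a, b) ∈ E).card := by
              apply card_le_card_of_injOn Prod.snd
              · intro p hp
                simp only [hE2, mem_coe, mem_filter] at hp
                obtain ⟨⟨hpE, _⟩, hpa⟩ := hp
                simp only [mem_coe, mem_filter]
                refine ⟨(mem_product.1 (hE hpE)).2, ?_⟩
                rw [← hpa] at *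
                exact hpE
              · intro p hp q hq hpq
                simp only [hE2, mem_coe, mem_filter] at hp hq
                exact Prod.ext (hp.2.trans hq.2.symm) hpq
            refine hfib.trans (Nat.le_floor ?_)
            exact hda.le
          · have : (E2.filter fun p => p.1 = a) = ∅ := by
              rw [filter_eq_empty_iff]
              intro p hp
              simp only [hE2, mem_filter] at hp
              intro hpa
              rw [hpa] at hp
              exact hda hp.2.2
            simp [this]
      _ = m * ⌊ε' * (n : ℝ)⌋₊ := by rw [sum_const, smul_eq_mul, hm]
  -- bound on E3
  have h3 : E3.card ≤ s * s' * (t - 1) ^ 2 := by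
    set P : α × β → Finset α × Finset β → Prop := fun p q =>
      q ∈ N ×ˢ N' ∧ q.1 ⊆ (A.filter fun a => (a, p.2) ∈ E) ∧
        q.2 ⊆ (B.filter fun b => (p.1, b) ∈ E) with hP
    have hex : ∀ p ∈ E3, ∃ q, P p q := by
      intro p hp
      simp only [hE3, mem_filter] at hp
      obtain ⟨hpE, h1', h2'⟩ := hp
      obtain ⟨ha, hb⟩ := mem_product.1 (hE hpE)
      obtain ⟨T, hTN, hTsub⟩ := hnet p.2 hb h1'
      obtain ⟨T', hT'N, hT'sub⟩ := hnet' p.1 ha h2'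
      exact ⟨(T, T'), mem_product.2 ⟨hTN, hT'N⟩, hTsub, hT'sub⟩
    set f : α × β → Finset α × Finset β := fun p =>
      if h : ∃ q, P p q then h.choose else (∅, ∅) with hf
    have hfspec : ∀ p ∈ E3, P p (f p) := by
      intro p hp
      have h := hex p hp
      simp only [hf, dif_pos h]
      exact h.choose_spec
    have hmap : ∀ p ∈ E3, f p ∈ N ×ˢ N' := fun p hp => (hfspec p hp).1
    rw [card_eq_sum_card_fiberwise hmap]
    have hfiber : ∀ q ∈ N ×ˢ N', (E3.filter fun p => f p = q).card ≤ (t - 1) ^ 2 := by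
      intro q hq
      obtain ⟨hq1, hq2⟩ := mem_product.1 hq
      set X := A.filter (fun a => ∀ b ∈ q.2, (a, b) ∈ E) with hX
      set Y := B.filter (fun b => ∀ a ∈ q.1, (a, b) ∈ E) with hY
      have hsub : (E3.filter fun p => f p = q) ⊆ X ×ˢ Y := by
        intro p hp
        obtain ⟨hpE3, hpq⟩ := mem_filter.1 hp
        have hspec := hfspec p hpE3
        rw [hpq] at hspec
        obtain ⟨_, hq1sub, hq2sub⟩ := hspec
        have hpE : p ∈ E := mem_of_mem_filter p hpE3
        obtain ⟨ha, hb⟩ := mem_product.1 (hE hpE)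
        rw [mem_product]
        constructor
        · rw [hX, mem_filter]
          exact ⟨ha, fun b hbq => (mem_filter.1 (hq2sub hbq)).2⟩
        · rw [hY, mem_filter]
          exact ⟨hb, fun a haq => (mem_filter.1 (hq1sub haq)).2⟩
      have hXcard : X.card ≤ t - 1 := by
        by_contra hcon
        push_neg at hcon
        have htX : t ≤ X.card := by omega
        obtain ⟨S, hSX, hScard⟩ := Finset.exists_subset_card_eq htX
        refine hfree ⟨S, q.2, ?_, (hN'sub q.2 hq2).1, hScard, (hN'sub q.2 hq2).2, ?_⟩
        · exact hSX.trans (filter_subset _ _)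
        · intro a haS b hbT
          exact (mem_filter.1 (hSX haS)).2 b hbT
      have hYcard : Y.card ≤ t - 1 := by
        by_contra hcon
        push_neg at hcon
        have htY : t ≤ Y.card := by omega
        obtain ⟨T, hTY, hTcard⟩ := Finset.exists_subset_card_eq htY
        refine hfree ⟨q.1, T, (hNsub q.1 hq1).1, ?_, (hNsub q.1 hq1).2, hTcard, ?_⟩
        · exact hTY.trans (filter_subset _ _)
        · intro a haS b hbT
          exact (mem_filter.1 (hTY hbT)).2 a haS
      calc (E3.filter fun p => f p = q).card ≤ (X ×ˢ Y).card := card_le_card hsub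
        _ = X.card * Y.card := card_product _ _
        _ ≤ (t - 1) * (t - 1) := Nat.mul_le_mul hXcard hYcard
        _ = (t - 1) ^ 2 := (sq _).symm
    calc ∑ q ∈ N ×ˢ N', (E3.filter fun p => f p = q).card
        ≤ ∑ _q ∈ N ×ˢ N', (t - 1) ^ 2 := sum_le_sum hfiber
      _ = s * s' * (t - 1) ^ 2 := by
          rw [sum_const, smul_eq_mul, card_product, hs, hs']
  omega
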